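/- arXiv:2211.09749 — 6 statements merged into one kernel-verified Lean document; each statement's English description precedes it below -/
import Mathlib

section
/- The function H(x) = e^{√2 x} / (1 + e^{2√2 x})^{1/2} is a stationary solution of the φ⁶ field equation: H''(x) = U'(H(x)) for all real x, where U(φ) = φ²(1-φ²)². -/
open Real MeasureTheory

noncomputable def U (φ : ℝ) : ℝ := φ ^ 2 * (1 - φ ^ 2) ^ 2

noncomputable def H (x : ℝ) : ℝ :=
  Real.exp (Real.sqrt 2 * x) / Real.sqrt (1 + Real.exp (2 * Real.sqrt 2 * x))

private lemma Heq : H = fun y : ℝ =>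
    Real.exp (Real.sqrt 2 * y) / Real.sqrt (1 + Real.exp (Real.sqrt 2 * y) ^ 2) := by
  funext y
  unfold H
  rw [show (2:ℝ) * Real.sqrt 2 * y = Real.sqrt 2 * y + Real.sqrt 2 * y by ring,
    Real.exp_add, ← sq]

private lemma hexp (x : ℝ) :
    HasDerivAt (fun y : ℝ => Real.exp (Real.sqrt 2 * y))
      (Real.sqrt 2 * Real.exp (Real.sqrt 2 * x)) x := by
  have h := ((hasDerivAt_id x).const_mul (Real.sqrt 2)).exp
  simpa [mul_comm] using h

private lemma hq (x : ℝ) : (0:ℝ) < 1 + Real.exp (Real.sqrt 2 * x) ^ 2 := by positivity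

private lemma hderiv1 (x : ℝ) :
    HasDerivAt H
      (Real.sqrt 2 * Real.exp (Real.sqrt 2 * x) /
        ((1 + Real.exp (Real.sqrt 2 * x) ^ 2) *
          Real.sqrt (1 + Real.exp (Real.sqrt 2 * x) ^ 2))) x := by
  rw [Heq]
  set f := fun y : ℝ => Real.exp (Real.sqrt 2 * y) with hf
  have hfx : 0 < f x := Real.exp_pos _
  have hqx := hq x
  have hr : 0 < Real.sqrt (1 + f x ^ 2) := Real.sqrt_pos.mpr hqx
  have hr2 : Real.sqrt (1 + f x ^ 2) ^ 2 = 1 + f x ^ 2 := Real.sq_sqrt hqx.le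
  have hden : HasDerivAt (fun y => 1 + f y ^ 2)
      (2 * f x * (Real.sqrt 2 * f x)) x := by
    have := ((hexp x).pow 2).const_add 1
    simpa [hf] using this
  have hsq : HasDerivAt (fun y => Real.sqrt (1 + f y ^ 2))
      ((2 * f x * (Real.sqrt 2 * f x)) / (2 * Real.sqrt (1 + f x ^ 2))) x :=
    hden.sqrt hqx.ne'
  have hd := (hexp x).div hsq hr.ne'
  refine hd.congr_deriv ?_
  simp only [hf] at hr2 ⊢
  field_simp
  rw [hr2]; ring

private lemma hderiv2 (x : ℝ) :
    HasDerivAt (deriv H)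
      (2 * Real.exp (Real.sqrt 2 * x) * (1 - 2 * Real.exp (Real.sqrt 2 * x) ^ 2) /
        ((1 + Real.exp (Real.sqrt 2 * x) ^ 2) ^ 2 *
          Real.sqrt (1 + Real.exp (Real.sqrt 2 * x) ^ 2))) x := by
  have hdH : deriv H = fun y : ℝ =>
      Real.sqrt 2 * Real.exp (Real.sqrt 2 * y) /
        ((1 + Real.exp (Real.sqrt 2 * y) ^ 2) *
          Real.sqrt (1 + Real.exp (Real.sqrt 2 * y) ^ 2)) := by
    funext y; exact (hderiv1 y).deriv
  rw [hdH]
  set f := fun y : ℝ => Real.exp (Real.sqrt 2 * y) with hf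
  have hfx : 0 < f x := Real.exp_pos _
  have hqx := hq x
  have hr : 0 < Real.sqrt (1 + f x ^ 2) := Real.sqrt_pos.mpr hqx
  have hr2 : Real.sqrt (1 + f x ^ 2) ^ 2 = 1 + f x ^ 2 := Real.sq_sqrt hqx.le
  have hs2 : Real.sqrt 2 ^ 2 = 2 := Real.sq_sqrt (by norm_num)
  have hnum : HasDerivAt (fun y => Real.sqrt 2 * f y)
      (Real.sqrt 2 * (Real.sqrt 2 * f x)) x := (hexp x).const_mul _
  have hden0 : HasDerivAt (fun y => 1 + f y ^ 2)
      (2 * f x * (Real.sqrt 2 * f x)) x := by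
    have := ((hexp x).pow 2).const_add 1
    simpa [hf] using this
  have hsq : HasDerivAt (fun y => Real.sqrt (1 + f y ^ 2))
      ((2 * f x * (Real.sqrt 2 * f x)) / (2 * Real.sqrt (1 + f x ^ 2))) x :=
    hden0.sqrt hqx.ne'
  have hden : HasDerivAt (fun y => (1 + f y ^ 2) * Real.sqrt (1 + f y ^ 2))
      ((2 * f x * (Real.sqrt 2 * f x)) * Real.sqrt (1 + f x ^ 2) +
        (1 + f x ^ 2) * ((2 * f x * (Real.sqrt 2 * f x)) / (2 * Real.sqrt (1 + f x ^ 2)))) x :=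
    hden0.mul hsq
  have hdenne : (1 + f x ^ 2) * Real.sqrt (1 + f x ^ 2) ≠ 0 := by positivity
  have hd := hnum.div hden hdenne
  refine hd.congr_deriv ?_
  simp only [hf] at hr2 ⊢
  field_simp
  rw [hr2, hs2]; ring

theorem kink_is_stationary_solution :
    ∀ x : ℝ, deriv (deriv H) x = deriv U (H x) := by
  intro x
  have hU : ∀ φ : ℝ, HasDerivAt U
      (2 * φ * (1 - φ ^ 2) ^ 2 + φ ^ 2 * (2 * (1 - φ ^ 2) * (-(2 * φ)))) φ := by
    intro φ
    have h1 : HasDerivAt (fun t : ℝ => t ^ 2) (2 * φ) φ := by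
      simpa using hasDerivAt_pow 2 φ
    have h2 : HasDerivAt (fun t : ℝ => (1 - t ^ 2) ^ 2)
        (2 * (1 - φ ^ 2) * (-(2 * φ))) φ := by
      have := ((hasDerivAt_const φ (1:ℝ)).sub h1).pow 2
      refine this.congr_deriv ?_
      simp only [Pi.sub_apply]
      ring
    have := h1.mul h2
    exact this
  rw [(hderiv2 x).deriv, (hU (H x)).deriv]
  rw [Heq]
  set f := Real.exp (Real.sqrt 2 * x) with hf
  have hfx : 0 < f := Real.exp_pos _
  have hqx : (0:ℝ) < 1 + f ^ 2 := by positivity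
  have hr : 0 < Real.sqrt (1 + f ^ 2) := Real.sqrt_pos.mpr hqx
  have hr2 : Real.sqrt (1 + f ^ 2) ^ 2 = 1 + f ^ 2 := Real.sq_sqrt hqx.le
  simp only
  rw [← hf]
  field_simp
  rw [show Real.sqrt (1 + f ^ 2) ^ 4 = (Real.sqrt (1 + f ^ 2) ^ 2) ^ 2 by ring, hr2]
  ring_nf
end

section
/- The L² norm squared of the derivative of the kink is ∫_ℝ (H'_{0,1}(x))² dx = 1/(2√2), where H_{0,1}(x) = e^{√2 x}/(1+e^{2√2 x})^{1/2}. -/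
open Real MeasureTheory

noncomputable def Hg (x : ℝ) : ℝ :=
  2 * Real.exp (2 * Real.sqrt 2 * x) / (1 + Real.exp (2 * Real.sqrt 2 * x)) ^ 3

noncomputable def HF (x : ℝ) : ℝ :=
  -1 / (2 * Real.sqrt 2 * (1 + Real.exp (2 * Real.sqrt 2 * x)) ^ 2)

lemma sqrt2_pos : (0:ℝ) < Real.sqrt 2 := Real.sqrt_pos.mpr (by norm_num)

lemma sqrt2_sq : Real.sqrt 2 ^ 2 = 2 := Real.sq_sqrt (by norm_num)

lemma hasDerivAt_u (x : ℝ) :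
    HasDerivAt (fun x => 1 + Real.exp (2 * Real.sqrt 2 * x))
      (2 * Real.sqrt 2 * Real.exp (2 * Real.sqrt 2 * x)) x := by
  have h : HasDerivAt (fun x : ℝ => 2 * Real.sqrt 2 * x) (2 * Real.sqrt 2) x := by
    simpa using (hasDerivAt_id x).const_mul (2 * Real.sqrt 2)
  have := (h.exp).const_add 1
  refine this.congr_deriv ?_
  ring

lemma H_hasDerivAt (x : ℝ) :
    HasDerivAt H (Real.sqrt 2 * Real.exp (Real.sqrt 2 * x) /
      Real.sqrt (1 + Real.exp (2 * Real.sqrt 2 * x)) ^ 3) x := by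
  set u := Real.exp (2 * Real.sqrt 2 * x) with hu
  have hupos : 0 < u := Real.exp_pos _
  have h1u : 0 < 1 + u := by linarith
  set s := Real.sqrt (1 + u) with hs
  have hspos : 0 < s := Real.sqrt_pos.mpr h1u
  have hs2 : s ^ 2 = 1 + u := Real.sq_sqrt h1u.le
  have hN : HasDerivAt (fun x => Real.exp (Real.sqrt 2 * x))
      (Real.sqrt 2 * Real.exp (Real.sqrt 2 * x)) x := by
    have h : HasDerivAt (fun x : ℝ => Real.sqrt 2 * x) (Real.sqrt 2) x := by
      simpa using (hasDerivAt_id x).const_mul (Real.sqrt 2)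
    have := h.exp
    convert this using 1
    ring
  have hD : HasDerivAt (fun x => Real.sqrt (1 + Real.exp (2 * Real.sqrt 2 * x)))
      ((2 * Real.sqrt 2 * u) / (2 * s)) x := by
    exact (hasDerivAt_u x).sqrt (by positivity)
  have hH := hN.div hD (ne_of_gt hspos)
  refine hH.congr_deriv (Eq.symm ?_)
  rw [← hu, ← hs]
  have hs3 : s ^ 3 ≠ 0 := by positivity
  field_simp
  linear_combination (-1:ℝ) * hs2

lemma deriv_H_sq (x : ℝ) : (deriv H x) ^ 2 = Hg x := by
  rw [(H_hasDerivAt x).deriv]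
  set u := Real.exp (2 * Real.sqrt 2 * x) with hu
  have hupos : 0 < u := Real.exp_pos _
  have h1u : 0 < 1 + u := by linarith
  set s := Real.sqrt (1 + u) with hs
  have hspos : 0 < s := Real.sqrt_pos.mpr h1u
  have hs2 : s ^ 2 = 1 + u := Real.sq_sqrt h1u.le
  have hN2 : Real.exp (Real.sqrt 2 * x) ^ 2 = u := by
    rw [sq, ← Real.exp_add, hu]
    congr 1
    ring
  have hs6 : s ^ 6 = (1 + u) ^ 3 := by
    rw [show (6:ℕ) = 2 * 3 from rfl, pow_mul, hs2]
  rw [Hg, ← hu]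
  rw [div_pow, mul_pow, sqrt2_sq, hN2, ← pow_mul]
  norm_num [hs6]

lemma HF_hasDerivAt (x : ℝ) : HasDerivAt HF (Hg x) x := by
  set u := Real.exp (2 * Real.sqrt 2 * x) with hu
  have hupos : 0 < u := Real.exp_pos _
  have h1u : 0 < 1 + u := by linarith
  have hh : HasDerivAt (fun x => 2 * Real.sqrt 2 * (1 + Real.exp (2 * Real.sqrt 2 * x)) ^ 2)
      (2 * Real.sqrt 2 * ((2:ℕ) * (1 + u) ^ 1 * (2 * Real.sqrt 2 * u))) x :=
    ((hasDerivAt_u x).pow 2).const_mul (2 * Real.sqrt 2)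
  have hne : 2 * Real.sqrt 2 * (1 + u) ^ 2 ≠ 0 := by positivity
  have hF := (hasDerivAt_const x (-1 : ℝ)).div hh hne
  have h2 : Real.sqrt 2 * Real.sqrt 2 = 2 := Real.mul_self_sqrt (by norm_num)
  refine hF.congr_deriv (Eq.symm ?_)
  rw [Hg, ← hu]
  field_simp
  ring

lemma tendsto_u_atBot : Filter.Tendsto (fun x => Real.exp (2 * Real.sqrt 2 * x))
    Filter.atBot (nhds 0) := by
  apply Real.tendsto_exp_atBot.comp
  exact (Filter.tendsto_const_mul_atBot_of_pos (by positivity)).mpr Filter.tendsto_id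

lemma tendsto_u_atTop : Filter.Tendsto (fun x => Real.exp (2 * Real.sqrt 2 * x))
    Filter.atTop Filter.atTop := by
  apply Real.tendsto_exp_atTop.comp
  exact Filter.Tendsto.const_mul_atTop (by positivity) Filter.tendsto_id

lemma HF_tendsto_atBot : Filter.Tendsto HF Filter.atBot (nhds (-1 / (2 * Real.sqrt 2))) := by
  have h : Filter.Tendsto (fun u : ℝ => -1 / (2 * Real.sqrt 2 * (1 + u) ^ 2)) (nhds 0)
      (nhds (-1 / (2 * Real.sqrt 2))) := by
    have : ContinuousAt (fun u : ℝ => -1 / (2 * Real.sqrt 2 * (1 + u) ^ 2)) 0 := by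
      apply ContinuousAt.div continuousAt_const (by fun_prop)
      norm_num
    simpa using this.tendsto
  exact h.comp tendsto_u_atBot

lemma HF_tendsto_atTop : Filter.Tendsto HF Filter.atTop (nhds 0) := by
  have h0 : Filter.Tendsto (fun x => 1 + Real.exp (2 * Real.sqrt 2 * x))
      Filter.atTop Filter.atTop := Filter.tendsto_atTop_add_const_left _ 1 tendsto_u_atTop
  have h1 : Filter.Tendsto (fun x => (1 + Real.exp (2 * Real.sqrt 2 * x)) ^ 2)
      Filter.atTop Filter.atTop := (Filter.tendsto_pow_atTop two_ne_zero).comp h0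
  have h2 : Filter.Tendsto (fun x => 2 * Real.sqrt 2 * (1 + Real.exp (2 * Real.sqrt 2 * x)) ^ 2)
      Filter.atTop Filter.atTop :=
    Filter.Tendsto.const_mul_atTop (by positivity : (0:ℝ) < 2 * Real.sqrt 2) h1
  exact Filter.Tendsto.div_atTop tendsto_const_nhds h2

lemma Hg_integrable : Integrable Hg := by
  have hmaj : Integrable (fun x : ℝ => 2 * Real.exp (-|x|)) := by
    have h1 : IntegrableOn (fun x : ℝ => 2 * Real.exp (-|x|)) (Set.Iic 0) := by
      refine MeasureTheory.IntegrableOn.congr_fun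
        ((integrableOn_exp_Iic 0).const_mul 2) ?_ measurableSet_Iic
      intro x hx
      simp only [Set.mem_Iic] at hx
      show 2 * Real.exp x = 2 * Real.exp (-|x|)
      rw [abs_of_nonpos hx, neg_neg]
    have h2 : IntegrableOn (fun x : ℝ => 2 * Real.exp (-|x|)) (Set.Ioi 0) := by
      refine MeasureTheory.IntegrableOn.congr_fun
        ((exp_neg_integrableOn_Ioi 0 one_pos).const_mul 2) ?_ measurableSet_Ioi
      intro x hx
      simp only [Set.mem_Ioi] at hx
      show 2 * Real.exp (-1 * x) = 2 * Real.exp (-|x|)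
      rw [abs_of_pos hx, neg_mul, one_mul]
    have := h1.union h2
    rw [Set.Iic_union_Ioi] at this
    exact integrableOn_univ.mp this
  apply hmaj.mono'
  · apply Continuous.aestronglyMeasurable
    unfold Hg
    fun_prop (disch := intro x; positivity)
  · refine Filter.Eventually.of_forall fun x => ?_
    set u := Real.exp (2 * Real.sqrt 2 * x) with hu
    have hupos : 0 < u := Real.exp_pos _
    have h1u : (0:ℝ) < 1 + u := by linarith
    have hHg : Hg x = 2 * u / (1 + u) ^ 3 := rfl
    rw [hHg, Real.norm_eq_abs, abs_of_nonneg (by positivity)]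
    have hs1 : (1:ℝ) ≤ Real.sqrt 2 := by
      nlinarith [sqrt2_sq, sqrt2_pos]
    rcases le_or_gt x 0 with hx | hx
    · have hux : u ≤ Real.exp x := by
        apply Real.exp_le_exp.mpr
        nlinarith
    -- |x| = -x, exp(-|x|) = exp x
      rw [abs_of_nonpos hx, neg_neg]
      have : 2 * u / (1 + u) ^ 3 ≤ 2 * u := by
        rw [div_le_iff₀ (by positivity)]
        nlinarith [hupos, one_le_pow₀ (by linarith : (1:ℝ) ≤ 1 + u) (n := 3)]
      linarith [this, hux]
    · rw [abs_of_pos hx]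
      have hux : Real.exp x ≤ u := by
        apply Real.exp_le_exp.mpr
        nlinarith
      have hex : 0 < Real.exp x := Real.exp_pos x
      have h1 : 2 * u / (1 + u) ^ 3 ≤ 2 / u := by
        rw [div_le_div_iff₀ (by positivity) hupos]
        nlinarith [hupos, mul_pos (mul_pos hupos hupos) hupos, sq_nonneg u, sq_nonneg (1 - u)]
      have h2 : 2 / u ≤ 2 / Real.exp x := by
        apply div_le_div_of_nonneg_left (by norm_num) hex hux
      rw [Real.exp_neg]
      calc 2 * u / (1 + u) ^ 3 ≤ 2 / Real.exp x := le_trans h1 h2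
        _ = 2 * (Real.exp x)⁻¹ := by ring

theorem kink_derivative_L2_norm_sq :
    ∫ x : ℝ, (deriv H x) ^ 2 = 1 / (2 * Real.sqrt 2) := by
  have h1 : ∫ x : ℝ, (deriv H x) ^ 2 = ∫ x : ℝ, Hg x := by
    congr 1
    ext x
    exact deriv_H_sq x
  rw [h1]
  have := integral_of_hasDerivAt_of_tendsto HF_hasDerivAt Hg_integrable
    HF_tendsto_atBot HF_tendsto_atTop
  rw [this]
  ring
end

section
/- For any real numbers x₁ < x₂ with z = x₂ - x₁, any α, β > 0 with α ≠ β, and any natural number m, there exists a constant C depending only on α, β, m such that ∫_ℝ |x - x₁|^m e^{-α(x-x₁)₊} e^{-β(x₂-x)₊} dx ≤ C · max((1 + z^m) e^{-αz}, e^{-βz}), where y₊ = max(y, 0). -/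
open Real MeasureTheory Set

lemma aux_integrable_abs (m : ℕ) {c : ℝ} (hc : 0 < c) :
    Integrable (fun t : ℝ => |t| ^ m * Real.exp (-c * |t|)) := by
  have hIoi : IntegrableOn (fun t : ℝ => |t| ^ m * Real.exp (-c * |t|)) (Set.Ioi 0) := by
    have h := integrableOn_rpow_mul_exp_neg_mul_rpow (p := 1) (s := (m : ℝ)) (b := c)
      (lt_of_lt_of_le neg_one_lt_zero (Nat.cast_nonneg m)) zero_lt_one hc
    refine h.congr_fun (fun x hx => ?_) measurableSet_Ioi
    beta_reduce
    rw [Real.rpow_one, Real.rpow_natCast, abs_of_pos (mem_Ioi.mp hx)]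
  have int_Iic : IntegrableOn (fun t : ℝ => |t| ^ m * Real.exp (-c * |t|)) (Set.Iic 0) := by
    rw [← Measure.map_neg_eq_self (volume : Measure ℝ)]
    have me : MeasurableEmbedding fun x : ℝ => -x := (Homeomorph.neg ℝ).measurableEmbedding
    rw [me.integrableOn_map_iff]
    simp_rw [Function.comp_def, abs_neg, neg_preimage, neg_Iic, neg_zero]
    exact Iff.mpr integrableOn_Ici_iff_integrableOn_Ioi hIoi
  have h := int_Iic.union hIoi
  rwa [Set.Iic_union_Ioi, integrableOn_univ] at h

lemma aux_integrable_exp {c : ℝ} (hc : 0 < c) :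
    Integrable (fun t : ℝ => Real.exp (-c * |t|)) := by
  simpa using aux_integrable_abs 0 hc

lemma case1_exp {α β c t z : ℝ} (hβ : 0 < β) (hc1 : c ≤ β) (hc2 : c ≤ α - β) (hz : 0 < z) :
    c * |t| + β * z ≤ α * max t 0 + β * max (z - t) 0 := by
  rcases le_total t 0 with ht | ht
  · rw [max_eq_right ht, abs_of_nonpos ht, max_eq_left (by linarith)]
    nlinarith
  · rw [max_eq_left ht, abs_of_nonneg ht]
    rcases le_total t z with h | h
    · rw [max_eq_left (by linarith)]; nlinarith
    · rw [max_eq_right (by linarith)]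
      nlinarith [mul_nonneg (by linarith : (0:ℝ) ≤ α - β - c) ht,
        mul_nonneg hβ.le (by linarith : (0:ℝ) ≤ t - z)]

lemma case2_exp {α β c t z : ℝ} (hα : 0 < α) (hc1 : c ≤ α) (hc2 : c ≤ β - α) (hz : 0 < z) :
    c * |t - z| + α * z ≤ α * max t 0 + β * max (z - t) 0 := by
  rcases le_total t 0 with ht | ht
  · rw [max_eq_right ht, abs_of_nonpos (by linarith), max_eq_left (by linarith)]
    nlinarith [mul_nonneg (by linarith : (0:ℝ) ≤ β - α - c) (by linarith : (0:ℝ) ≤ z - t),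
      mul_nonneg hα.le (by linarith : (0:ℝ) ≤ -t)]
  · rw [max_eq_left ht]
    rcases le_total t z with h | h
    · rw [abs_of_nonpos (by linarith), max_eq_left (by linarith)]; nlinarith
    · rw [abs_of_nonneg (by linarith), max_eq_right (by linarith)]; nlinarith

lemma pow_add_le_aux {a b : ℝ} (ha : 0 ≤ a) (hb : 0 ≤ b) (m : ℕ) :
    (a + b) ^ m ≤ 2 ^ m * (a ^ m + b ^ m) := by
  calc (a + b) ^ m ≤ (2 * max a b) ^ m := by
        refine pow_le_pow_left₀ (by positivity) ?_ m
        rcases le_total a b with h | h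
        · rw [max_eq_right h]; linarith
        · rw [max_eq_left h]; linarith
    _ = 2 ^ m * (max a b) ^ m := by rw [mul_pow]
    _ ≤ 2 ^ m * (a ^ m + b ^ m) := by
        refine mul_le_mul_of_nonneg_left ?_ (by positivity)
        rcases le_total a b with h | h
        · rw [max_eq_right h]; nlinarith [pow_nonneg ha m]
        · rw [max_eq_left h]; nlinarith [pow_nonneg hb m]

theorem interaction_integral_bound (α β : ℝ) (m : ℕ) (hα : 0 < α) (hβ : 0 < β)
    (hαβ : α ≠ β) :
    ∃ C : ℝ, 0 < C ∧ ∀ x₁ x₂ : ℝ, x₁ < x₂ →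
      (∫ x : ℝ, |x - x₁| ^ m * Real.exp (-α * max (x - x₁) 0) *
          Real.exp (-β * max (x₂ - x) 0)) ≤
        C * max ((1 + (x₂ - x₁) ^ m) * Real.exp (-α * (x₂ - x₁)))
          (Real.exp (-β * (x₂ - x₁))) := by
  set c := min (min α β) |α - β| with hc_def
  have hc : 0 < c := lt_min (lt_min hα hβ) (abs_pos.mpr (sub_ne_zero.mpr hαβ))
  set K₁ := ∫ t : ℝ, |t| ^ m * Real.exp (-c * |t|) with hK₁def
  set K₂ := ∫ t : ℝ, Real.exp (-c * |t|) with hK₂def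
  have hK₁ : 0 ≤ K₁ := integral_nonneg fun t => by positivity
  have hK₂ : 0 ≤ K₂ := integral_nonneg fun t => by positivity
  have h2m : (1 : ℝ) ≤ 2 ^ m := one_le_pow₀ (by norm_num)
  refine ⟨2 ^ m * (K₁ + K₂) + 1, by positivity, fun x₁ x₂ hx => ?_⟩
  set z := x₂ - x₁ with hzdef
  have hz : 0 < z := sub_pos.mpr hx
  set M := max ((1 + z ^ m) * Real.exp (-α * z)) (Real.exp (-β * z)) with hM
  have hM0 : 0 < M := lt_of_lt_of_le (exp_pos _) (le_max_right _ _)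
  rcases lt_or_gt_of_ne hαβ with hab | hab
  · -- α < β
    have hc1 : c ≤ α := (min_le_left _ _).trans (min_le_left α β)
    have hc2 : c ≤ β - α := by
      have : |α - β| = β - α := by rw [abs_sub_comm, abs_of_pos (by linarith)]
      exact (min_le_right _ _).trans_eq this
    have hg : Integrable (fun t : ℝ => (|t| ^ m + z ^ m) * Real.exp (-c * |t|)) := by
      have h := (aux_integrable_abs m hc).add ((aux_integrable_exp hc).const_mul (z ^ m))
      refine h.congr (Filter.Eventually.of_forall fun t => ?_)
      simp only [Pi.add_apply]
      ring
    have hbound_int : Integrable (fun x : ℝ =>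
        2 ^ m * ((|x - x₂| ^ m + z ^ m) * Real.exp (-c * |x - x₂|)) * Real.exp (-α * z)) :=
      ((hg.comp_sub_right x₂).const_mul (2 ^ m)).mul_const _
    have hpt : ∀ x : ℝ, |x - x₁| ^ m * Real.exp (-α * max (x - x₁) 0) *
        Real.exp (-β * max (x₂ - x) 0) ≤
        2 ^ m * ((|x - x₂| ^ m + z ^ m) * Real.exp (-c * |x - x₂|)) * Real.exp (-α * z) := by
      intro x
      have hexp : Real.exp (-α * max (x - x₁) 0) * Real.exp (-β * max (x₂ - x) 0) ≤
          Real.exp (-c * |x - x₂|) * Real.exp (-α * z) := by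
        rw [← Real.exp_add, ← Real.exp_add]
        apply Real.exp_le_exp.mpr
        have h := case2_exp (α := α) (β := β) (c := c) (t := x - x₁) (z := z) hα hc1 hc2 hz
        have e1 : x - x₁ - z = x - x₂ := by rw [hzdef]; ring
        have e2 : z - (x - x₁) = x₂ - x := by rw [hzdef]; ring
        rw [e1, e2] at h
        linarith
      have hpow : |x - x₁| ^ m ≤ 2 ^ m * (|x - x₂| ^ m + z ^ m) := by
        have h1 : |x - x₁| ≤ |x - x₂| + z := by
          have : x - x₁ = (x - x₂) + z := by rw [hzdef]; ring
          rw [this]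
          exact (abs_add_le _ _).trans (by rw [abs_of_pos hz])
        calc |x - x₁| ^ m ≤ (|x - x₂| + z) ^ m :=
              pow_le_pow_left₀ (abs_nonneg _) h1 m
          _ ≤ 2 ^ m * (|x - x₂| ^ m + z ^ m) :=
              pow_add_le_aux (abs_nonneg _) hz.le m
      calc |x - x₁| ^ m * Real.exp (-α * max (x - x₁) 0) * Real.exp (-β * max (x₂ - x) 0)
          = |x - x₁| ^ m * (Real.exp (-α * max (x - x₁) 0) * Real.exp (-β * max (x₂ - x) 0)) := by
            ring
        _ ≤ (2 ^ m * (|x - x₂| ^ m + z ^ m)) * (Real.exp (-c * |x - x₂|) * Real.exp (-α * z)) :=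
            mul_le_mul hpow hexp (by positivity) (by positivity)
        _ = 2 ^ m * ((|x - x₂| ^ m + z ^ m) * Real.exp (-c * |x - x₂|)) * Real.exp (-α * z) := by
            ring
    have hint_eq : (∫ x : ℝ,
        2 ^ m * ((|x - x₂| ^ m + z ^ m) * Real.exp (-c * |x - x₂|)) * Real.exp (-α * z)) =
        2 ^ m * (K₁ + z ^ m * K₂) * Real.exp (-α * z) := by
      rw [integral_mul_const, integral_const_mul]
      congr 2
      have h := integral_sub_right_eq_self (μ := volume)
        (fun t : ℝ => (|t| ^ m + z ^ m) * Real.exp (-c * |t|)) x₂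
      rw [h]
      have : (fun t : ℝ => (|t| ^ m + z ^ m) * Real.exp (-c * |t|)) =
          fun t : ℝ => |t| ^ m * Real.exp (-c * |t|) + z ^ m * Real.exp (-c * |t|) := by
        funext t; ring
      rw [this, integral_add (aux_integrable_abs m hc)
        ((aux_integrable_exp hc).const_mul (z ^ m)), integral_const_mul]
    calc (∫ x : ℝ, |x - x₁| ^ m * Real.exp (-α * max (x - x₁) 0) *
          Real.exp (-β * max (x₂ - x) 0))
        ≤ ∫ x : ℝ, 2 ^ m * ((|x - x₂| ^ m + z ^ m) * Real.exp (-c * |x - x₂|)) *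
            Real.exp (-α * z) :=
          integral_mono_of_nonneg (Filter.Eventually.of_forall fun x => by positivity)
            hbound_int (Filter.Eventually.of_forall hpt)
      _ = 2 ^ m * (K₁ + z ^ m * K₂) * Real.exp (-α * z) := hint_eq
      _ ≤ ((2 ^ m * (K₁ + K₂) + 1) * (1 + z ^ m)) * Real.exp (-α * z) := by
          refine mul_le_mul_of_nonneg_right ?_ (exp_pos _).le
          have hzm : 0 ≤ z ^ m := pow_nonneg hz.le m
          nlinarith [mul_nonneg hK₁ hzm, mul_nonneg hK₂ hzm,
            mul_nonneg (mul_nonneg (le_trans zero_le_one h2m) hK₁) hzm]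
      _ = (2 ^ m * (K₁ + K₂) + 1) * ((1 + z ^ m) * Real.exp (-α * z)) := by ring
      _ ≤ (2 ^ m * (K₁ + K₂) + 1) * M :=
          mul_le_mul_of_nonneg_left (le_max_left _ _) (by positivity)
  · -- β < α
    have hc1 : c ≤ β := (min_le_left _ _).trans (min_le_right α β)
    have hc2 : c ≤ α - β := by
      have : |α - β| = α - β := abs_of_pos (by linarith)
      exact (min_le_right _ _).trans_eq this
    have hbound_int : Integrable (fun x : ℝ =>
        |x - x₁| ^ m * Real.exp (-c * |x - x₁|) * Real.exp (-β * z)) :=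
      ((aux_integrable_abs m hc).comp_sub_right x₁).mul_const _
    have hpt : ∀ x : ℝ, |x - x₁| ^ m * Real.exp (-α * max (x - x₁) 0) *
        Real.exp (-β * max (x₂ - x) 0) ≤
        |x - x₁| ^ m * Real.exp (-c * |x - x₁|) * Real.exp (-β * z) := by
      intro x
      rw [mul_assoc, mul_assoc, ← Real.exp_add, ← Real.exp_add]
      refine mul_le_mul_of_nonneg_left (Real.exp_le_exp.mpr ?_) (by positivity)
      have h := case1_exp (α := α) (β := β) (c := c) (t := x - x₁) (z := z) hβ hc1 hc2 hz
      have e2 : z - (x - x₁) = x₂ - x := by rw [hzdef]; ring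
      rw [e2] at h
      linarith
    calc (∫ x : ℝ, |x - x₁| ^ m * Real.exp (-α * max (x - x₁) 0) *
          Real.exp (-β * max (x₂ - x) 0))
        ≤ ∫ x : ℝ, |x - x₁| ^ m * Real.exp (-c * |x - x₁|) * Real.exp (-β * z) :=
          integral_mono_of_nonneg (Filter.Eventually.of_forall fun x => by positivity)
            hbound_int (Filter.Eventually.of_forall hpt)
      _ = K₁ * Real.exp (-β * z) := by
          rw [integral_mul_const]
          congr 1
          exact integral_sub_right_eq_self (fun t : ℝ => |t| ^ m * Real.exp (-c * |t|)) x₁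
      _ ≤ (2 ^ m * (K₁ + K₂) + 1) * M := by
          refine mul_le_mul ?_ (le_max_right _ _) (exp_pos _).le (by positivity)
          nlinarith
end

section
/- For any real numbers x₁ < x₂ with z = x₂ - x₁ > 0, any α > 0, and any natural number m, there exists a constant C depending only on α and m such that ∫_ℝ |x - x₁|^m e^{-α(x-x₁)₊} e^{-α(x₂-x)₊} dx ≤ C (1 + z^{m+1}) e^{-αz}, where y₊ = max(y, 0). -/
open Real MeasureTheory

private lemma shift_Ioi_integral (g : ℝ → ℝ) (z : ℝ) :
    ∫ t in Set.Ioi z, g (t - z) = ∫ t in Set.Ioi (0:ℝ), g t := by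
  have A : MeasurableEmbedding (fun x : ℝ => x + z) :=
    (Homeomorph.addRight z).isClosedEmbedding.measurableEmbedding
  have h := A.setIntegral_map (μ := volume) (fun y => g (y - z)) (Set.Ioi z)
  rw [map_add_right_eq_self volume z] at h
  rw [h]
  have hpre : (fun x : ℝ => x + z) ⁻¹' Set.Ioi z = Set.Ioi (0:ℝ) := by
    ext x; simp
  rw [hpre]
  simp

private lemma shift_Ioi_integrable {g : ℝ → ℝ} (hg : IntegrableOn g (Set.Ioi (0:ℝ)))
    (z : ℝ) : IntegrableOn (fun t => g (t - z)) (Set.Ioi z) := by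
  have A : MeasurableEmbedding (fun x : ℝ => x + z) :=
    (Homeomorph.addRight z).isClosedEmbedding.measurableEmbedding
  have h := A.integrableOn_map_iff (f := fun y => g (y - z)) (s := Set.Ioi z) (μ := volume)
  rw [map_add_right_eq_self volume z] at h
  rw [h]
  have hpre : (fun x : ℝ => x + z) ⁻¹' Set.Ioi z = Set.Ioi (0:ℝ) := by
    ext x; simp
  rw [hpre]
  have hc : ((fun y => g (y - z)) ∘ fun x : ℝ => x + z) = g := by
    funext x; simp
  rw [hc]
  exact hg

private lemma neg_Iic_integrable {g : ℝ → ℝ} (hg : IntegrableOn g (Set.Ioi (0:ℝ))) :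
    IntegrableOn (fun u => g (-u)) (Set.Iic (0:ℝ)) := by
  have A : MeasurableEmbedding (fun x : ℝ => -x) :=
    (Homeomorph.neg ℝ).isClosedEmbedding.measurableEmbedding
  have h := A.integrableOn_map_iff (f := g) (s := Set.Ioi (0:ℝ)) (μ := volume)
  rw [Measure.map_neg_eq_self (volume : Measure ℝ)] at h
  have hpre : (fun x : ℝ => -x) ⁻¹' Set.Ioi (0:ℝ) = Set.Iio (0:ℝ) := by
    ext x; simp
  rw [hpre] at h
  rw [integrableOn_Iic_iff_integrableOn_Iio]
  exact h.mp hg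

private lemma phi_integrable (α : ℝ) (hα : 0 < α) (m : ℕ) :
    IntegrableOn (fun t : ℝ => t ^ m * Real.exp (-α * t)) (Set.Ioi (0:ℝ)) := by
  have h := integrableOn_rpow_mul_exp_neg_mul_rpow (s := (m:ℝ)) (p := 1)
    (lt_of_lt_of_le neg_one_lt_zero (Nat.cast_nonneg m)) one_pos hα
  apply h.congr_fun ?_ measurableSet_Ioi
  intro x hx
  simp only [Real.rpow_natCast, Real.rpow_one]

theorem interaction_integral_bound_equal_rates (α : ℝ) (m : ℕ) (hα : 0 < α) :
    ∃ C : ℝ, 0 < C ∧ ∀ x₁ x₂ : ℝ, x₁ < x₂ →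
      (∫ x : ℝ, |x - x₁| ^ m * Real.exp (-α * max (x - x₁) 0) *
          Real.exp (-α * max (x₂ - x) 0)) ≤
        C * (1 + (x₂ - x₁) ^ (m + 1)) * Real.exp (-α * (x₂ - x₁)) := by
  have hφ := phi_integrable α hα m
  set φ : ℝ → ℝ := fun t => t ^ m * Real.exp (-α * t) with hφdef
  set K : ℝ := ∫ t in Set.Ioi (0:ℝ), φ t with hKdef
  have hK0 : 0 ≤ K := setIntegral_nonneg measurableSet_Ioi fun t ht => by
    show (0:ℝ) ≤ t ^ m * Real.exp (-α * t)
    exact mul_nonneg (pow_nonneg (le_of_lt ht) m) (Real.exp_nonneg _)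
  have hE : IntegrableOn (fun t : ℝ => Real.exp (-α * t)) (Set.Ioi (0:ℝ)) :=
    exp_neg_integrableOn_Ioi 0 hα
  set L : ℝ := ∫ t in Set.Ioi (0:ℝ), Real.exp (-α * t) with hLdef
  have hL0 : 0 ≤ L := setIntegral_nonneg measurableSet_Ioi fun t ht => by positivity
  have h2m : (0:ℝ) < 2 ^ m := by positivity
  refine ⟨(1 + 2 ^ m) * K + 2 ^ m * L + 1, by nlinarith, ?_⟩
  intro x₁ x₂ hx
  set z : ℝ := x₂ - x₁ with hzdef
  have hz0 : 0 < z := sub_pos.mpr hx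
  set g : ℝ → ℝ := fun u => |u| ^ m * Real.exp (-α * max u 0) * Real.exp (-α * max (z - u) 0)
    with hgdef
  have htrans : (∫ x : ℝ, |x - x₁| ^ m * Real.exp (-α * max (x - x₁) 0) *
      Real.exp (-α * max (x₂ - x) 0)) = ∫ u : ℝ, g u := by
    rw [← integral_sub_right_eq_self g x₁]
    congr 1; funext x
    have : x₂ - x = z - (x - x₁) := by ring
    rw [this]
  rw [htrans]
  -- description of g on the three pieces
  have hg1 : Set.EqOn g (fun u => (φ (-u)) * Real.exp (-α * z)) (Set.Iic 0) := by
    intro u hu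
    simp only [Set.mem_Iic] at hu
    have h1 : max u 0 = 0 := max_eq_right hu
    have h2 : max (z - u) 0 = z - u := max_eq_left (by linarith)
    simp only [hgdef, hφdef, h1, h2, abs_of_nonpos hu]
    rw [mul_assoc, mul_assoc, ← Real.exp_add, ← Real.exp_add]
    congr 2
    ring
  have hg2 : Set.EqOn g (fun u => u ^ m * Real.exp (-α * z)) (Set.Ioc 0 z) := by
    intro u hu
    obtain ⟨hu1, hu2⟩ := hu
    have h1 : max u 0 = u := max_eq_left hu1.le
    have h2 : max (z - u) 0 = z - u := max_eq_left (by linarith)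
    simp only [hgdef, h1, h2, abs_of_pos hu1]
    rw [mul_assoc, ← Real.exp_add]
    congr 2
    ring
  have hg3 : Set.EqOn g φ (Set.Ioi z) := by
    intro u hu
    simp only [Set.mem_Ioi] at hu
    have h1 : max u 0 = u := max_eq_left (by linarith)
    have h2 : max (z - u) 0 = 0 := max_eq_right (by linarith)
    simp only [hgdef, hφdef, h1, h2, abs_of_pos (by linarith : (0:ℝ) < u)]
    norm_num
  -- integrability on the pieces
  have hint1 : IntegrableOn g (Set.Iic 0) := by
    apply IntegrableOn.congr_fun ?_ hg1.symm measurableSet_Iic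
    exact (neg_Iic_integrable hφ).mul_const _
  have hint2 : IntegrableOn g (Set.Ioc 0 z) := by
    apply IntegrableOn.congr_fun ?_ hg2.symm measurableSet_Ioc
    exact ((continuous_pow m).mul continuous_const).integrableOn_Ioc
  have hint3 : IntegrableOn g (Set.Ioi z) := by
    apply IntegrableOn.congr_fun ?_ hg3.symm measurableSet_Ioi
    exact hφ.mono_set (Set.Ioi_subset_Ioi hz0.le)
  have hunion : Set.Ioc 0 z ∪ Set.Ioi z = Set.Ioi (0:ℝ) := Set.Ioc_union_Ioi_eq_Ioi hz0.le
  have hintIoi : IntegrableOn g (Set.Ioi (0:ℝ)) := by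
    rw [← hunion]; exact hint2.union hint3
  -- split the integral
  have hsplit : (∫ u : ℝ, g u) =
      (∫ u in Set.Iic 0, g u) + ((∫ u in Set.Ioc 0 z, g u) + ∫ u in Set.Ioi z, g u) := by
    rw [← intervalIntegral.integral_Iic_add_Ioi hint1 hintIoi, ← hunion,
      setIntegral_union (Set.Ioc_disjoint_Ioi le_rfl) measurableSet_Ioi hint2 hint3]
  rw [hsplit]
  -- piece 1
  have hp1 : (∫ u in Set.Iic 0, g u) = K * Real.exp (-α * z) := by
    rw [setIntegral_congr_fun measurableSet_Iic hg1, integral_mul_const]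
    congr 1
    have := integral_comp_neg_Iic (0:ℝ) φ
    rw [neg_zero] at this
    exact this
  -- piece 2
  have hp2 : (∫ u in Set.Ioc 0 z, g u) ≤ z ^ (m + 1) * Real.exp (-α * z) := by
    rw [setIntegral_congr_fun measurableSet_Ioc hg2]
    have hb : ∀ u ∈ Set.Ioc (0:ℝ) z, u ^ m * Real.exp (-α * z) ≤
        z ^ m * Real.exp (-α * z) := by
      intro u hu
      have : u ^ m ≤ z ^ m := pow_le_pow_left₀ hu.1.le hu.2 m
      exact mul_le_mul_of_nonneg_right this (Real.exp_nonneg _)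
    calc (∫ u in Set.Ioc 0 z, u ^ m * Real.exp (-α * z))
        ≤ ∫ _u in Set.Ioc 0 z, z ^ m * Real.exp (-α * z) := by
          apply setIntegral_mono_on
          · exact ((continuous_pow m).mul continuous_const).integrableOn_Ioc
          · exact continuous_const.integrableOn_Ioc
          · exact measurableSet_Ioc
          · exact hb
      _ = z ^ (m + 1) * Real.exp (-α * z) := by
          rw [setIntegral_const, measureReal_def, Real.volume_Ioc, smul_eq_mul,
            ENNReal.toReal_ofReal (by linarith)]
          ring
  -- piece 3
  have hp3 : (∫ u in Set.Ioi z, g u) ≤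
      2 ^ m * Real.exp (-α * z) * (K + z ^ m * L) := by
    rw [setIntegral_congr_fun measurableSet_Ioi hg3]
    set ψ : ℝ → ℝ := fun u => 2 ^ m * Real.exp (-α * z) *
      ((u - z) ^ m * Real.exp (-α * (u - z)) + z ^ m * Real.exp (-α * (u - z))) with hψdef
    have hψint : IntegrableOn ψ (Set.Ioi z) :=
      ((shift_Ioi_integrable hφ z).add
        ((shift_Ioi_integrable hE z).const_mul (z ^ m))).const_mul _
    have hφψ : ∀ u ∈ Set.Ioi z, φ u ≤ ψ u := by
      intro u hu
      simp only [Set.mem_Ioi] at hu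
      have huz : 0 ≤ u - z := by linarith
      have hpow : u ^ m ≤ 2 ^ m * ((u - z) ^ m + z ^ m) := by
        have h1 : u ^ m = ((u - z) + z) ^ m := by ring_nf
        have h2 := add_pow_le huz hz0.le m
        have h3 : (2:ℝ) ^ (m - 1) ≤ 2 ^ m := by
          apply pow_le_pow_right₀ (by norm_num) (Nat.sub_le m 1)
        nlinarith [pow_nonneg huz m, pow_nonneg hz0.le m, h2]
      have hexp : Real.exp (-α * u) = Real.exp (-α * z) * Real.exp (-α * (u - z)) := by
        rw [← Real.exp_add]; ring_nf
      simp only [hφdef, hψdef, hexp]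
      have he : 0 ≤ Real.exp (-α * (u - z)) := Real.exp_nonneg _
      have he2 : 0 ≤ Real.exp (-α * z) := Real.exp_nonneg _
      nlinarith [mul_le_mul_of_nonneg_right hpow he, pow_nonneg huz m, pow_nonneg hz0.le m]
    calc (∫ u in Set.Ioi z, φ u) ≤ ∫ u in Set.Ioi z, ψ u :=
          setIntegral_mono_on (hφ.mono_set (Set.Ioi_subset_Ioi hz0.le)) hψint
            measurableSet_Ioi hφψ
      _ = 2 ^ m * Real.exp (-α * z) * (K + z ^ m * L) := by
          simp only [hψdef]
          rw [integral_const_mul, integral_add (shift_Ioi_integrable hφ z)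
            ((shift_Ioi_integrable hE z).const_mul (z ^ m)), integral_const_mul]
          rw [shift_Ioi_integral φ z, shift_Ioi_integral (fun t => Real.exp (-α * t)) z]
      -- done
  -- combine
  have hzm : z ^ m ≤ 1 + z ^ (m + 1) := by
    rcases le_or_gt z 1 with h | h
    · have : z ^ m ≤ 1 := pow_le_one₀ hz0.le h
      nlinarith [pow_nonneg hz0.le (m + 1)]
    · have : z ^ m ≤ z ^ (m + 1) := pow_le_pow_right₀ h.le (Nat.le_succ m)
      linarith
  have he : 0 < Real.exp (-α * z) := Real.exp_pos _
  have hz1 : 0 ≤ z ^ (m + 1) := pow_nonneg hz0.le _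
  nlinarith [hp2, hp3, mul_le_mul_of_nonneg_left hzm (by positivity : (0:ℝ) ≤ 2 ^ m * L * Real.exp (-α * z)), mul_nonneg (mul_nonneg h2m.le hK0) he.le, mul_nonneg hK0 he.le, mul_nonneg (mul_nonneg (mul_nonneg h2m.le hK0) hz1) he.le, mul_nonneg hz1 he.le]
end

section
/- The integral identity -√2 ∫_ℝ [U''(H_{0,1}(x)) - 2] e^{-√2 x} H'_{0,1}(x) dx = 4√2 holds, where U(φ) = φ²(1-φ²)² and H_{0,1}(x) = e^{√2 x}(1+e^{2√2 x})^{-1/2}. Equivalently, -2 ∫_ℝ [6 H_{0,1}(x)⁵ - 8 H_{0,1}(x)³] e^{-√2 x} dx = 4√2. -/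
open Real MeasureTheory

/-- auxiliary: `v x = (sqrt (1 + exp(√2 x)^2))⁻¹` -/
noncomputable def V (x : ℝ) : ℝ := (Real.sqrt (1 + Real.exp (Real.sqrt 2 * x) ^ 2))⁻¹

lemma s_pos (x : ℝ) : 0 < 1 + Real.exp (Real.sqrt 2 * x) ^ 2 := by positivity

lemma sqrt_s_pos (x : ℝ) : 0 < Real.sqrt (1 + Real.exp (Real.sqrt 2 * x) ^ 2) :=
  Real.sqrt_pos.2 (s_pos x)

lemma V_pos (x : ℝ) : 0 < V x := inv_pos.2 (sqrt_s_pos x)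

lemma V_sq (x : ℝ) : V x ^ 2 * (1 + Real.exp (Real.sqrt 2 * x) ^ 2) = 1 := by
  have h := Real.sq_sqrt (s_pos x).le
  unfold V
  rw [inv_pow, h]
  exact inv_mul_cancel₀ (s_pos x).ne'

lemma V_le_one (x : ℝ) : V x ≤ 1 := by
  unfold V
  rw [inv_le_one_iff₀]
  right
  exact Real.one_le_sqrt.2 (by nlinarith [sq_nonneg (Real.exp (Real.sqrt 2 * x))])

lemma H_eq (x : ℝ) : H x = Real.exp (Real.sqrt 2 * x) * V x := by
  unfold H V
  rw [show 2 * Real.sqrt 2 * x = Real.sqrt 2 * x + Real.sqrt 2 * x by ring, Real.exp_add,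
    ← sq, div_eq_mul_inv]

lemma HV_le_one (x : ℝ) : Real.exp (Real.sqrt 2 * x) * V x ≤ 1 := by
  unfold V
  rw [← div_eq_mul_inv, div_le_one (sqrt_s_pos x)]
  calc Real.exp (Real.sqrt 2 * x) = Real.sqrt (Real.exp (Real.sqrt 2 * x) ^ 2) :=
        (Real.sqrt_sq (Real.exp_pos _).le).symm
    _ ≤ _ := Real.sqrt_le_sqrt (by nlinarith)

lemma hasDerivAt_V (x : ℝ) :
    HasDerivAt V (-(Real.sqrt 2) * Real.exp (Real.sqrt 2 * x) ^ 2 * V x ^ 3) x := by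
  have hE : HasDerivAt (fun x : ℝ => Real.exp (Real.sqrt 2 * x))
      (Real.exp (Real.sqrt 2 * x) * Real.sqrt 2) x :=
    (Real.hasDerivAt_exp _).comp x (by simpa using (hasDerivAt_id x).const_mul (Real.sqrt 2))
  have hs : HasDerivAt (fun x : ℝ => 1 + Real.exp (Real.sqrt 2 * x) ^ 2)
      (2 * Real.exp (Real.sqrt 2 * x) ^ 1 * (Real.exp (Real.sqrt 2 * x) * Real.sqrt 2)) x :=
    ((hE.pow 2).const_add 1)
  have hsq := hs.sqrt (s_pos x).ne'
  have hinv : HasDerivAt V _ x := hsq.inv (sqrt_s_pos x).ne'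
  convert hinv using 1
  have h1 : Real.sqrt (1 + Real.exp (Real.sqrt 2 * x) ^ 2) ^ 2
      = 1 + Real.exp (Real.sqrt 2 * x) ^ 2 := Real.sq_sqrt (s_pos x).le
  unfold V
  field_simp


lemma hasDerivAt_E (x : ℝ) : HasDerivAt (fun x : ℝ => Real.exp (Real.sqrt 2 * x))
    (Real.exp (Real.sqrt 2 * x) * Real.sqrt 2) x :=
  (Real.hasDerivAt_exp _).comp x (by simpa using (hasDerivAt_id x).const_mul (Real.sqrt 2))

lemma hasDerivAt_H (x : ℝ) :
    HasDerivAt H (Real.sqrt 2 * Real.exp (Real.sqrt 2 * x) * V x ^ 3) x := by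
  have hprod : HasDerivAt (fun x => Real.exp (Real.sqrt 2 * x) * V x) _ x :=
    (hasDerivAt_E x).mul (hasDerivAt_V x)
  rw [show H = fun x => Real.exp (Real.sqrt 2 * x) * V x from funext H_eq]
  convert hprod using 1
  linear_combination (Real.sqrt 2 * Real.exp (Real.sqrt 2 * x) * V x) * V_sq x

lemma deriv_U_eq : deriv U = fun φ : ℝ => 2 * φ - 8 * φ ^ 3 + 6 * φ ^ 5 := by
  funext φ
  have h0 : HasDerivAt (fun φ : ℝ => φ ^ 2 * (1 - φ ^ 2) ^ 2)
      ((2 : ℕ) * φ ^ 1 * (1 - φ ^ 2) ^ 2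
        + φ ^ 2 * ((2 : ℕ) * (1 - φ ^ 2) ^ 1 * (0 - (2 : ℕ) * φ ^ 1))) φ :=
    (hasDerivAt_pow 2 φ).mul (((hasDerivAt_const φ (1:ℝ)).sub (hasDerivAt_pow 2 φ)).pow 2)
  have h1 : HasDerivAt U _ φ := h0
  rw [h1.deriv]
  push_cast
  ring

lemma deriv2_U_eq (φ : ℝ) : deriv (deriv U) φ = 2 - 24 * φ ^ 2 + 30 * φ ^ 4 := by
  rw [deriv_U_eq]
  have h0 : HasDerivAt (fun φ : ℝ => 2 * φ - 8 * φ ^ 3 + 6 * φ ^ 5)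
      ((2 * 1 - 8 * ((3:ℕ) * φ ^ 2)) + 6 * ((5:ℕ) * φ ^ 4)) φ :=
    (((hasDerivAt_id φ).const_mul 2).sub ((hasDerivAt_pow 3 φ).const_mul 8)).add
      ((hasDerivAt_pow 5 φ).const_mul 6)
  rw [h0.deriv]
  push_cast
  ring

/-- explicit form of the first integrand -/
noncomputable def G1 (x : ℝ) : ℝ :=
  Real.sqrt 2 * (6 * Real.exp (Real.sqrt 2 * x) ^ 2 * V x ^ 5
    - 30 * Real.exp (Real.sqrt 2 * x) ^ 2 * V x ^ 7)

/-- explicit form of the second integrand -/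
noncomputable def G2 (x : ℝ) : ℝ :=
  -2 * Real.exp (Real.sqrt 2 * x) ^ 2 * V x ^ 3
    - 6 * Real.exp (Real.sqrt 2 * x) ^ 2 * V x ^ 5

lemma integrand1_eq (x : ℝ) :
    (deriv (deriv U) (H x) - 2) * Real.exp (-(Real.sqrt 2) * x) * deriv H x = G1 x := by
  rw [(hasDerivAt_H x).deriv, deriv2_U_eq (H x), H_eq x, neg_mul, Real.exp_neg]
  have hEne : Real.exp (Real.sqrt 2 * x) ≠ 0 := (Real.exp_pos _).ne'
  unfold G1
  field_simp
  linear_combination (30 * Real.exp (Real.sqrt 2 * x) ^ 2 * V x ^ 5) * V_sq x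

lemma integrand2_eq (x : ℝ) :
    (6 * H x ^ 5 - 8 * H x ^ 3) * Real.exp (-(Real.sqrt 2) * x) = G2 x := by
  rw [H_eq x, neg_mul, Real.exp_neg]
  have hEne : Real.exp (Real.sqrt 2 * x) ≠ 0 := (Real.exp_pos _).ne'
  unfold G2
  field_simp
  linear_combination (6 * V x ^ 3) * V_sq x

noncomputable def F1 (x : ℝ) : ℝ := 6 * V x ^ 5 - 2 * V x ^ 3

noncomputable def F2 (x : ℝ) : ℝ := Real.sqrt 2 * (V x + V x ^ 3)

lemma hasDerivAt_F1 (x : ℝ) : HasDerivAt F1 (G1 x) x := by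
  have h : HasDerivAt (fun x => 6 * V x ^ 5 - 2 * V x ^ 3) _ x :=
    (((hasDerivAt_V x).pow 5).const_mul 6).sub (((hasDerivAt_V x).pow 3).const_mul 2)
  have he : F1 = fun x => 6 * V x ^ 5 - 2 * V x ^ 3 := rfl
  rw [he]
  convert h using 1
  unfold G1
  push_cast
  ring

lemma hasDerivAt_F2 (x : ℝ) : HasDerivAt F2 (G2 x) x := by
  have h : HasDerivAt (fun x => Real.sqrt 2 * (V x + V x ^ 3)) _ x :=
    ((hasDerivAt_V x).add ((hasDerivAt_V x).pow 3)).const_mul (Real.sqrt 2)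
  have he : F2 = fun x => Real.sqrt 2 * (V x + V x ^ 3) := rfl
  rw [he]
  convert h using 1
  have h2 : Real.sqrt 2 * Real.sqrt 2 = 2 := Real.mul_self_sqrt (by norm_num)
  unfold G2
  push_cast
  linear_combination (Real.exp (Real.sqrt 2 * x) ^ 2 * V x ^ 3
    + 3 * Real.exp (Real.sqrt 2 * x) ^ 2 * V x ^ 5) * h2

lemma sqrt2_le : Real.sqrt 2 ≤ 1.5 := by
  nlinarith [Real.sq_sqrt (by norm_num : (2:ℝ) ≥ 0), Real.sqrt_nonneg 2]

lemma one_le_sqrt2 : (1:ℝ) ≤ Real.sqrt 2 := Real.one_le_sqrt.2 one_le_two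

lemma base_bound (x : ℝ) :
    Real.exp (Real.sqrt 2 * x) ^ 2 * V x ^ 3 ≤ Real.exp (-|x|) := by
  have hV0 := V_pos x
  have hV1 := V_le_one x
  have hE := Real.exp_pos (Real.sqrt 2 * x)
  rcases le_or_gt x 0 with hx | hx
  · rw [abs_of_nonpos hx, neg_neg]
    have h1 : Real.exp (Real.sqrt 2 * x) ^ 2 * V x ^ 3 ≤ Real.exp (Real.sqrt 2 * x) ^ 2 := by
      nlinarith [pow_le_one₀ hV0.le hV1 (n := 3), pow_pos hV0 3]
    have h2 : Real.exp (Real.sqrt 2 * x) ^ 2 ≤ Real.exp x := by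
      rw [← Real.exp_nat_mul]
      apply Real.exp_le_exp.2
      push_cast
      nlinarith [one_le_sqrt2]
    linarith
  · rw [abs_of_pos hx]
    have h3 : (Real.exp (Real.sqrt 2 * x) * V x) ^ 3 ≤ 1 :=
      pow_le_one₀ (by positivity) (HV_le_one x)
    have h4 : Real.exp (Real.sqrt 2 * x) ^ 2 * V x ^ 3 ≤ (Real.exp (Real.sqrt 2 * x))⁻¹ := by
      rw [← one_div, le_div_iff₀ hE]
      calc Real.exp (Real.sqrt 2 * x) ^ 2 * V x ^ 3 * Real.exp (Real.sqrt 2 * x)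
          = (Real.exp (Real.sqrt 2 * x) * V x) ^ 3 := by ring
        _ ≤ 1 := h3
    have h5 : (Real.exp (Real.sqrt 2 * x))⁻¹ ≤ Real.exp (-x) := by
      rw [← Real.exp_neg]
      apply Real.exp_le_exp.2
      nlinarith [one_le_sqrt2]
    linarith

lemma D_integrable : Integrable (fun x : ℝ => Real.exp (-|x|)) := by
  have h1 : IntegrableOn (fun x : ℝ => Real.exp (-|x|)) (Set.Iic 0) := by
    apply (integrableOn_exp_Iic 0).congr_fun _ measurableSet_Iic
    intro x hx
    simp only [Set.mem_Iic] at hx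
    simp [abs_of_nonpos hx]
  have h2 : IntegrableOn (fun x : ℝ => Real.exp (-|x|)) (Set.Ioi 0) := by
    apply (exp_neg_integrableOn_Ioi 0 one_pos).congr_fun _ measurableSet_Ioi
    intro x hx
    simp only [Set.mem_Ioi] at hx
    norm_num [abs_of_pos hx]
  have h3 := h1.union h2
  rwa [Set.Iic_union_Ioi, integrableOn_univ] at h3

lemma differentiable_V : Differentiable ℝ V := fun x => (hasDerivAt_V x).differentiableAt

@[fun_prop]
lemma continuous_V : Continuous V := differentiable_V.continuous

@[fun_prop]
lemma continuous_E : Continuous (fun x : ℝ => Real.exp (Real.sqrt 2 * x)) :=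
  Real.continuous_exp.comp (continuous_const.mul continuous_id)

lemma G_bound_aux (x : ℝ) :
    Real.exp (Real.sqrt 2 * x) ^ 2 * V x ^ 5 ≤ Real.exp (-|x|) ∧
    Real.exp (Real.sqrt 2 * x) ^ 2 * V x ^ 7 ≤ Real.exp (-|x|) ∧
    0 ≤ Real.exp (Real.sqrt 2 * x) ^ 2 * V x ^ 5 ∧
    0 ≤ Real.exp (Real.sqrt 2 * x) ^ 2 * V x ^ 7 := by
  have hV0 := V_pos x
  have hV1 := V_le_one x
  have hE := Real.exp_pos (Real.sqrt 2 * x)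
  have hb := base_bound x
  have hv2 : V x ^ 2 ≤ 1 := pow_le_one₀ hV0.le hV1
  have hv4 : V x ^ 4 ≤ 1 := pow_le_one₀ hV0.le hV1
  refine ⟨?_, ?_, by positivity, by positivity⟩
  · calc Real.exp (Real.sqrt 2 * x) ^ 2 * V x ^ 5
        = Real.exp (Real.sqrt 2 * x) ^ 2 * V x ^ 3 * V x ^ 2 := by ring
      _ ≤ Real.exp (Real.sqrt 2 * x) ^ 2 * V x ^ 3 * 1 :=
          mul_le_mul_of_nonneg_left hv2 (by positivity)
      _ = Real.exp (Real.sqrt 2 * x) ^ 2 * V x ^ 3 := mul_one _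
      _ ≤ _ := hb
  · calc Real.exp (Real.sqrt 2 * x) ^ 2 * V x ^ 7
        = Real.exp (Real.sqrt 2 * x) ^ 2 * V x ^ 3 * V x ^ 4 := by ring
      _ ≤ Real.exp (Real.sqrt 2 * x) ^ 2 * V x ^ 3 * 1 :=
          mul_le_mul_of_nonneg_left hv4 (by positivity)
      _ = Real.exp (Real.sqrt 2 * x) ^ 2 * V x ^ 3 := mul_one _
      _ ≤ _ := hb

lemma G1_bound (x : ℝ) : |G1 x| ≤ 54 * Real.exp (-|x|) := by
  obtain ⟨h5, h7, h5n, h7n⟩ := G_bound_aux x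
  have hs := sqrt2_le
  have hs0 := Real.sqrt_nonneg 2
  rw [abs_le]
  constructor
  · unfold G1; nlinarith
  · unfold G1; nlinarith

lemma G2_bound (x : ℝ) : |G2 x| ≤ 54 * Real.exp (-|x|) := by
  obtain ⟨h5, h7, h5n, h7n⟩ := G_bound_aux x
  have hb := base_bound x
  have h3n : (0:ℝ) ≤ Real.exp (Real.sqrt 2 * x) ^ 2 * V x ^ 3 :=
    mul_nonneg (pow_nonneg (Real.exp_pos _).le 2) (pow_nonneg (V_pos x).le 3)
  rw [abs_le]
  constructor
  · unfold G2; nlinarith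
  · unfold G2; nlinarith

lemma continuous_G1 : Continuous G1 := by
  unfold G1
  fun_prop

lemma continuous_G2 : Continuous G2 := by
  unfold G2
  fun_prop

lemma G1_integrable : Integrable G1 := by
  refine (D_integrable.const_mul 54).mono continuous_G1.aestronglyMeasurable
    (Filter.Eventually.of_forall fun x => ?_)
  rw [Real.norm_eq_abs, Real.norm_eq_abs,
    abs_of_nonneg (show (0:ℝ) ≤ 54 * Real.exp (-|x|) by positivity)]
  exact G1_bound x

lemma G2_integrable : Integrable G2 := by
  refine (D_integrable.const_mul 54).mono continuous_G2.aestronglyMeasurable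
    (Filter.Eventually.of_forall fun x => ?_)
  rw [Real.norm_eq_abs, Real.norm_eq_abs,
    abs_of_nonneg (show (0:ℝ) ≤ 54 * Real.exp (-|x|) by positivity)]
  exact G2_bound x

lemma V_tendsto_atTop : Filter.Tendsto V Filter.atTop (nhds 0) := by
  have hbound : ∀ x : ℝ, V x ≤ Real.exp (-(Real.sqrt 2 * x)) := by
    intro x
    rw [Real.exp_neg]
    have hEle : Real.exp (Real.sqrt 2 * x) ≤ Real.sqrt (1 + Real.exp (Real.sqrt 2 * x) ^ 2) := by
      calc Real.exp (Real.sqrt 2 * x) = Real.sqrt (Real.exp (Real.sqrt 2 * x) ^ 2) :=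
            (Real.sqrt_sq (Real.exp_pos _).le).symm
        _ ≤ _ := Real.sqrt_le_sqrt (by nlinarith)
    exact inv_anti₀ (Real.exp_pos _) hEle
  have hlim : Filter.Tendsto (fun x : ℝ => Real.exp (-(Real.sqrt 2 * x))) Filter.atTop (nhds 0) := by
    apply Real.tendsto_exp_atBot.comp
    apply Filter.tendsto_neg_atTop_atBot.comp
    exact (Filter.tendsto_id.const_mul_atTop (by positivity : (0:ℝ) < Real.sqrt 2))
  exact squeeze_zero (fun x => (V_pos x).le) hbound hlim

lemma V_tendsto_atBot : Filter.Tendsto V Filter.atBot (nhds 1) := by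
  have hE : Filter.Tendsto (fun x : ℝ => Real.exp (Real.sqrt 2 * x)) Filter.atBot (nhds 0) := by
    apply Real.tendsto_exp_atBot.comp
    exact Filter.Tendsto.const_mul_atBot (by positivity : (0:ℝ) < Real.sqrt 2) Filter.tendsto_id
  have h : Filter.Tendsto V Filter.atBot _ := ((((hE.pow 2).const_add 1).sqrt).inv₀ (by norm_num))
  simpa using h

lemma F1_top : Filter.Tendsto F1 Filter.atTop (nhds 0) := by
  have h : Filter.Tendsto F1 Filter.atTop _ :=
    ((V_tendsto_atTop.pow 5).const_mul 6).sub ((V_tendsto_atTop.pow 3).const_mul 2)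
  simpa using h

lemma F1_bot : Filter.Tendsto F1 Filter.atBot (nhds 4) := by
  have h := ((V_tendsto_atBot.pow 5).const_mul 6).sub ((V_tendsto_atBot.pow 3).const_mul 2)
  norm_num at h
  exact h

lemma F2_top : Filter.Tendsto F2 Filter.atTop (nhds 0) := by
  have h : Filter.Tendsto F2 Filter.atTop _ :=
    (V_tendsto_atTop.add (V_tendsto_atTop.pow 3)).const_mul (Real.sqrt 2)
  simpa using h

lemma F2_bot : Filter.Tendsto F2 Filter.atBot (nhds (2 * Real.sqrt 2)) := by
  have h := (V_tendsto_atBot.add (V_tendsto_atBot.pow 3)).const_mul (Real.sqrt 2)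
  norm_num at h
  convert h using 2
  · unfold F2; ring
  ring

lemma integral_G1 : ∫ x : ℝ, G1 x = -4 := by
  have h := MeasureTheory.integral_of_hasDerivAt_of_tendsto hasDerivAt_F1 G1_integrable
    F1_bot F1_top
  rw [h]; norm_num

lemma integral_G2 : ∫ x : ℝ, G2 x = -(2 * Real.sqrt 2) := by
  have h := MeasureTheory.integral_of_hasDerivAt_of_tendsto hasDerivAt_F2 G2_integrable
    F2_bot F2_top
  rw [h]; ring

theorem key_integral_identity :
    (-(Real.sqrt 2)) * ∫ x : ℝ,
        (deriv (deriv U) (H x) - 2) * Real.exp (-(Real.sqrt 2) * x) * deriv H x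
      = 4 * Real.sqrt 2 ∧
    (-2 : ℝ) * ∫ x : ℝ,
        (6 * H x ^ 5 - 8 * H x ^ 3) * Real.exp (-(Real.sqrt 2) * x)
      = 4 * Real.sqrt 2 := by
  constructor
  · simp only [integrand1_eq, integral_G1]
    ring
  · simp only [integrand2_eq, integral_G2]
    ring
end

section
/- For every 0 < v < 1 and every real t, the determinant of the 4×4 matrix whose columns are L₁(t), L₂(t), L₃(t), L₄(t) (as defined from the fundamental system of the two-kink linearized ODE) equals -√2 v, independent of t. -/
open Real Matrix

theorem wronskian_determinant (v t : ℝ) (hv0 : 0 < v) (hv1 : v < 1) :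
    Matrix.det
      !![Real.tanh (Real.sqrt 2 * v * t),
          Real.sqrt 2 * v * t * Real.tanh (Real.sqrt 2 * v * t) - 1, 0, 0;
        0, 0, 1, t;
        Real.sqrt 2 * v * (1 / Real.cosh (Real.sqrt 2 * v * t)) ^ 2,
          2 * v ^ 2 * t * (1 / Real.cosh (Real.sqrt 2 * v * t)) ^ 2 +
            Real.sqrt 2 * v * Real.tanh (Real.sqrt 2 * v * t), 0, 0;
        0, 0, 0, 1] = -(Real.sqrt 2 * v) := by
  have hx := Real.sqrt 2 * v * t
  set x := Real.sqrt 2 * v * t with hxdef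
  have hc : Real.cosh x ≠ 0 := ne_of_gt (Real.cosh_pos x)
  have h1 : Real.cosh x ^ 2 - Real.sinh x ^ 2 = 1 := Real.cosh_sq_sub_sinh_sq x
  have h2 : Real.sqrt 2 ^ 2 = 2 := Real.sq_sqrt (by norm_num)
  simp [Matrix.det_succ_row_zero, Fin.sum_univ_succ, Fin.succAbove, Real.tanh_eq_sinh_div_cosh]
  field_simp
  have hxt : x * (Real.sqrt 2 * v) = 2 * v ^ 2 * t := by
    rw [hxdef]; linear_combination v ^ 2 * t * h2
  linear_combination (Real.sqrt 2 * Real.cosh x) * h1 +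
    (Real.sinh x * v * t) * h2
end
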